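/- Let f : ℝⁿ → ℝ be twice continuously differentiable and let x̄ be a local minimum with value f* and solution set S. Suppose S is a C¹ embedded submanifold near x̄, ker ∇²f(x̄) = T_{x̄}S, and ⟨v, ∇²f(x̄)v⟩ ≥ μ‖v‖² for all v in the normal space N_{x̄}S (the Morse–Bott property with constant μ). Then for every μ' < μ, the quadratic growth inequality f(x) - f* ≥ (μ'/2) dist(x, S)² holds for all x in some neighborhood of x̄. -/

import Mathlib

open Metric Filter Topology
open scoped RealInnerProductSpace

open InnerProductSpace Submodule

section Aux
variable {E : Type*} [NormedAddCommGroup E] [InnerProductSpace ℝ E] [CompleteSpace E]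

lemma mbqg_taylor (f : E → ℝ) (hf : ContDiff ℝ 2 f) (p v : E) (m : ℝ)
    (hgrad : gradient f p = 0)
    (hH : ∀ t ∈ Set.Icc (0:ℝ) 1, m ≤ ⟪fderiv ℝ (gradient f) (p + t • v) v, v⟫) :
    f p + m / 2 ≤ f (p + v) := by
  have hdf : Differentiable ℝ f := hf.differentiable (by norm_num)
  have hgc : ContDiff ℝ 1 (gradient f) := by
    have h1 : ContDiff ℝ 1 (fderiv ℝ f) := hf.fderiv_right (by norm_num)
    exact ((toDual ℝ E).symm.contDiff).comp h1
  set c : ℝ → E := fun t => p + t • v with hc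
  have hcd : ∀ t : ℝ, HasDerivAt c v t := fun t => by simpa [hc] using ((hasDerivAt_id t).smul_const v).const_add p
  -- derivative of t ↦ f (c t)
  have h1 : ∀ t : ℝ, HasDerivAt (fun s => f (c s)) ⟪gradient f (c t), v⟫ t := by
    intro t
    have := ((hdf (c t)).hasGradientAt.hasFDerivAt).comp_hasDerivAt t (hcd t)
    simpa [toDual_apply_apply, Function.comp_def] using this
  -- derivative of t ↦ gradient f (c t)
  have h2 : ∀ t : ℝ, HasDerivAt (fun s => gradient f (c s)) (fderiv ℝ (gradient f) (c t) v) t := by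
    intro t
    exact ((hgc.differentiable one_ne_zero (c t)).hasFDerivAt).comp_hasDerivAt t (hcd t)
  -- g' as a function
  set g1 : ℝ → ℝ := fun t => ⟪gradient f (c t), v⟫ - m * t with hg1
  have hg1d : ∀ t : ℝ, HasDerivAt g1 (⟪fderiv ℝ (gradient f) (c t) v, v⟫ - m) t := by
    intro t
    have hi : HasDerivAt (fun s => ⟪gradient f (c s), v⟫)
        (⟪gradient f (c t), (0:E)⟫ + ⟪fderiv ℝ (gradient f) (c t) v, v⟫) t :=
      HasDerivAt.inner ℝ (h2 t) (hasDerivAt_const t v)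
    exact (hi.sub ((hasDerivAt_id t).const_mul m)).congr_deriv (by simp)
  have hg1mono : MonotoneOn g1 (Set.Icc 0 1) := by
    apply monotoneOn_of_deriv_nonneg (convex_Icc 0 1)
    · exact fun t _ => (hg1d t).continuousAt.continuousWithinAt
    · exact fun t _ => ((hg1d t).differentiableAt).differentiableWithinAt
    · intro t ht
      rw [(hg1d t).deriv]
      have := hH t (interior_subset ht)
      linarith
  have hg1_0 : g1 0 = 0 := by simp only [hg1, hc, zero_smul, add_zero, hgrad, inner_zero_left, mul_zero, sub_zero]
  have hg1nonneg : ∀ t ∈ Set.Icc (0:ℝ) 1, 0 ≤ g1 t := by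
    intro t ht
    have := hg1mono (Set.mem_Icc.2 ⟨le_refl 0, zero_le_one⟩) ht ht.1
    rw [hg1_0] at this; exact this
  set h : ℝ → ℝ := fun t => f (c t) - f p - m * t ^ 2 / 2 with hh
  have hhd : ∀ t : ℝ, HasDerivAt h (g1 t) t := by
    intro t
    have := ((h1 t).sub_const (f p)).sub (((hasDerivAt_pow 2 t).const_mul m).div_const 2)
    simp only [hg1]
    exact this.congr_deriv (by push_cast; ring)
  have hhmono : MonotoneOn h (Set.Icc 0 1) := by
    apply monotoneOn_of_deriv_nonneg (convex_Icc 0 1)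
    · exact fun t _ => (hhd t).continuousAt.continuousWithinAt
    · exact fun t _ => ((hhd t).differentiableAt).differentiableWithinAt
    · intro t ht
      rw [(hhd t).deriv]
      exact hg1nonneg t (interior_subset ht)
  have := hhmono (Set.mem_Icc.2 ⟨le_refl 0, zero_le_one⟩) (Set.mem_Icc.2 ⟨zero_le_one, le_refl 1⟩) zero_le_one
  simp only [hh, hc] at this
  simp only [zero_smul, add_zero, one_smul, zero_pow, one_pow] at this
  linarith

end Aux

set_option maxHeartbeats 2000000 in
/-- Morse–Bott implies quadratic growth: if the solution set `S` is a C¹ submanifold near `xb`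
(given by a local defining function `φ` with surjective differential, whose tangent space at `xb`
is `T = ker Dφ(xb)`), the kernel of the Hessian equals `T`, and the Hessian is `μ`-positive
definite on the normal space `Tᗮ`, then for every `μ' < μ` quadratic growth holds near `xb`. -/
theorem mb_implies_qg {n d : ℕ}
    (f : EuclideanSpace ℝ (Fin n) → ℝ) (xb : EuclideanSpace ℝ (Fin n))
    (hf : ContDiff ℝ 2 f) (hmin : IsLocalMin f xb)
    (μ : ℝ) (hμ : 0 < μ)
    (S : Set (EuclideanSpace ℝ (Fin n)))
    (hS : S = {y | IsLocalMin f y ∧ f y = f xb})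
    (U : Set (EuclideanSpace ℝ (Fin n))) (hUopen : IsOpen U) (hxU : xb ∈ U)
    (φ : EuclideanSpace ℝ (Fin n) → EuclideanSpace ℝ (Fin d))
    (hφ : ContDiffOn ℝ 1 φ U)
    (hsurj : ∀ x ∈ U, Function.Surjective (fderiv ℝ φ x))
    (hdef : S ∩ U = {x ∈ U | φ x = 0})
    (T : Submodule ℝ (EuclideanSpace ℝ (Fin n)))
    (hT : T = LinearMap.ker (fderiv ℝ φ xb :
        EuclideanSpace ℝ (Fin n) →ₗ[ℝ] EuclideanSpace ℝ (Fin d)))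
    (hker : LinearMap.ker (fderiv ℝ (gradient f) xb :
        EuclideanSpace ℝ (Fin n) →ₗ[ℝ] EuclideanSpace ℝ (Fin n)) = T)
    (hpos : ∀ v ∈ Tᗮ, μ * ‖v‖ ^ 2 ≤ ⟪v, fderiv ℝ (gradient f) xb v⟫) :
    ∀ μ' < μ, ∀ᶠ x in 𝓝 xb, (μ' / 2) * (Metric.infDist x S) ^ 2 ≤ f x - f xb := by
  intro μ' hμ'
  classical
  have hxS : xb ∈ S := by rw [hS]; exact ⟨hmin, rfl⟩
  have hφxb : φ xb = 0 := by
    have h : xb ∈ S ∩ U := ⟨hxS, hxU⟩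
    rw [hdef] at h; exact h.2
  set ν : ℝ := max μ' 0 with hν
  have hνμ : ν < μ := max_lt hμ' hμ
  have hν0 : 0 ≤ ν := le_max_right _ _
  set ε : ℝ := μ - ν with hε
  have hε0 : 0 < ε := by simp only [hε]; linarith
  set H := fderiv ℝ (gradient f) xb with hHdef
  -- continuity of the Hessian
  have hgc : ContDiff ℝ 1 (gradient f) :=
    ((toDual ℝ (EuclideanSpace ℝ (Fin n))).symm.contDiff).comp (hf.fderiv_right (by norm_num))
  have hcont : Continuous (fun y => fderiv ℝ (gradient f) y) := hgc.continuous_fderiv one_ne_zero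
  obtain ⟨δ, hδ0, hδ⟩ : ∃ δ > 0, ∀ y ∈ ball xb δ, ‖fderiv ℝ (gradient f) y - H‖ ≤ ε := by
    have h2 : ∀ᶠ y in 𝓝 xb, fderiv ℝ (gradient f) y ∈ closedBall H ε :=
      hcont.continuousAt (Metric.closedBall_mem_nhds H hε0)
    rcases Metric.eventually_nhds_iff_ball.1 h2 with ⟨δ, hδ0, hδ⟩
    exact ⟨δ, hδ0, fun y hy => by
      have := hδ y hy; rwa [mem_closedBall, dist_eq_norm] at this⟩
  -- implicit function setup
  have hA : HasStrictFDerivAt φ (fderiv ℝ φ xb) xb :=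
    (hφ.contDiffAt (hUopen.mem_nhds hxU)).hasStrictFDerivAt one_ne_zero
  set P : EuclideanSpace ℝ (Fin n) →L[ℝ] T := orthogonalProjection T with hPdef
  set data : ImplicitFunctionData ℝ (EuclideanSpace ℝ (Fin n)) (EuclideanSpace ℝ (Fin d)) T :=
    { leftFun := φ
      leftDeriv := fderiv ℝ φ xb
      rightFun := fun x => P (x - xb)
      rightDeriv := P
      pt := xb
      hasStrictFDerivAt_leftFun := hA
      hasStrictFDerivAt_rightFun := P.hasStrictFDerivAt.comp xb ((hasStrictFDerivAt_id xb).sub_const xb)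
      range_leftDeriv := LinearMap.range_eq_top.2 (hsurj xb hxU)
      range_rightDeriv := LinearMap.range_eq_top.2
        (fun y => ⟨y, orthogonalProjection_mem_subspace_eq_self y⟩)
      isCompl_ker := by
        rw [show LinearMap.ker (fderiv ℝ φ xb : _ →ₗ[ℝ] EuclideanSpace ℝ (Fin d)) = T from hT.symm,
          show LinearMap.ker (P : _ →ₗ[ℝ] T) = Tᗮ from ker_orthogonalProjection (K := T)]
        exact Submodule.isCompl_orthogonal_of_hasOrthogonalProjection } with hdata
  have hprodpt : data.prodFun xb = (0, 0) := by
    have h : data.prodFun xb = (φ xb, P (xb - xb)) := rfl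
    rw [h, hφxb, sub_self, map_zero]
  set ψ := data.implicitFunction with hψ
  -- key eventual identity
  have hev1 : ∀ᶠ q : EuclideanSpace ℝ (Fin d) × T in 𝓝 (0, 0),
      φ (ψ q.1 q.2) = q.1 ∧ P (ψ q.1 q.2 - xb) = q.2 := by
    have h := data.prod_map_implicitFunction
    rw [hprodpt] at h
    exact h.mono fun q hq => ⟨congrArg Prod.fst hq, congrArg Prod.snd hq⟩
  -- continuity of ψ at (0,0) and ψ 0 0 = xb
  have hmemtgt : ((0 : EuclideanSpace ℝ (Fin d)), (0 : T)) ∈ data.toOpenPartialHomeomorph.target := by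
    have := data.map_pt_mem_toOpenPartialHomeomorph_target
    rwa [show (data.leftFun data.pt, data.rightFun data.pt) = ((0 : EuclideanSpace ℝ (Fin d)), (0 : T)) from hprodpt] at this
  have hψcont : ContinuousAt (fun q : EuclideanSpace ℝ (Fin d) × T => ψ q.1 q.2) (0, 0) := by
    have h := data.toOpenPartialHomeomorph.continuousAt_symm hmemtgt
    exact h
  have hψ00 : ψ 0 0 = xb := by
    have h := data.toOpenPartialHomeomorph.left_inv data.pt_mem_toOpenPartialHomeomorph_source
    rw [show data.toOpenPartialHomeomorph data.pt = ((0 : EuclideanSpace ℝ (Fin d)), (0 : T)) from hprodpt] at h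
    exact h
  -- the projection map p
  set q : EuclideanSpace ℝ (Fin n) → EuclideanSpace ℝ (Fin d) × T :=
    fun x => (0, P (x - xb)) with hqdef
  have hqcont : Continuous q := by
    apply Continuous.prodMk continuous_const
    exact P.continuous.comp (continuous_id.sub continuous_const)
  have hqxb : q xb = (0, 0) := by simp [hqdef]
  have hqtend : Tendsto q (𝓝 xb) (𝓝 (0, 0)) := by
    rw [← hqxb]; exact hqcont.continuousAt
  set p : EuclideanSpace ℝ (Fin n) → EuclideanSpace ℝ (Fin n) :=
    fun x => ψ 0 (P (x - xb)) with hpdef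
  have hptend : Tendsto p (𝓝 xb) (𝓝 xb) := by
    have := hψcont.tendsto.comp hqtend
    rwa [hψ00] at this
  -- main pointwise claim with opaque px
  have main : ∀ x px : EuclideanSpace ℝ (Fin n), φ px = 0 → P (px - xb) = P (x - xb) →
      px ∈ U → px ∈ ball xb δ → x ∈ ball xb δ →
      (μ' / 2) * (Metric.infDist x S) ^ 2 ≤ f x - f xb := by
    intro x px hφp hPp hxpU hxpb hxb
    set v : EuclideanSpace ℝ (Fin n) := x - px with hvdef
    have hpS : px ∈ S := by
      have h : px ∈ {y ∈ U | φ y = 0} := ⟨hxpU, hφp⟩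
      rw [← hdef] at h; exact h.1
    have hvT : v ∈ Tᗮ := by
      have hPv : P v = 0 := by
        have hveq : v = (x - xb) - (px - xb) := by rw [hvdef]; abel
        rw [hveq, map_sub, hPp, sub_self]
      rw [← ker_orthogonalProjection (K := T)]
      exact LinearMap.mem_ker.2 hPv
    have hpmin : IsLocalMin f px := by rw [hS] at hpS; exact hpS.1
    have hfp : f px = f xb := by rw [hS] at hpS; exact hpS.2
    have hgradp : gradient f px = 0 := by
      unfold gradient; rw [hpmin.fderiv_eq_zero]; simp
    -- Hessian bound on the segment
    have hseg : ∀ t ∈ Set.Icc (0:ℝ) 1,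
        ν * ‖v‖ ^ 2 ≤ ⟪fderiv ℝ (gradient f) (px + t • v) v, v⟫ := by
      intro t ht
      set y := px + t • v with hy
      have hyb : y ∈ ball xb δ := by
        have h := (convex_ball xb δ).lineMap_mem hxpb hxb ht
        have heq : (AffineMap.lineMap px x) t = y := by
          simp only [AffineMap.lineMap_apply, vsub_eq_sub, vadd_eq_add]
          rw [hy, hvdef, add_comm]
        rwa [heq] at h
      set B := fderiv ℝ (gradient f) y with hB
      have hHv : μ * ‖v‖ ^ 2 ≤ ⟪H v, v⟫ := by
        rw [real_inner_comm]; exact hpos v hvT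
      have hpert : |⟪(B - H) v, v⟫| ≤ ε * ‖v‖ ^ 2 := by
        calc |⟪(B - H) v, v⟫| ≤ ‖(B - H) v‖ * ‖v‖ := abs_real_inner_le_norm _ _
          _ ≤ (‖B - H‖ * ‖v‖) * ‖v‖ :=
            mul_le_mul_of_nonneg_right ((B - H).le_opNorm v) (norm_nonneg v)
          _ ≤ (ε * ‖v‖) * ‖v‖ := by
            have := hδ y hyb
            gcongr
          _ = ε * ‖v‖ ^ 2 := by ring
      have hsplit : ⟪B v, v⟫ = ⟪H v, v⟫ + ⟪(B - H) v, v⟫ := by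
        rw [ContinuousLinearMap.sub_apply, inner_sub_left]; ring
      rw [hsplit]
      have h1 : -(ε * ‖v‖ ^ 2) ≤ ⟪(B - H) v, v⟫ := neg_le_of_abs_le hpert
      have h2 : ν * ‖v‖ ^ 2 = μ * ‖v‖ ^ 2 - ε * ‖v‖ ^ 2 := by rw [hε]; ring
      linarith
    have htaylor := mbqg_taylor f hf px v (ν * ‖v‖ ^ 2) hgradp hseg
    have hx' : px + v = x := by rw [hvdef]; abel
    rw [hx', hfp] at htaylor
    have hdist : Metric.infDist x S ≤ ‖v‖ := by
      have := Metric.infDist_le_dist_of_mem (x := x) hpS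
      rwa [dist_eq_norm, ← hvdef] at this
    have hd0 : 0 ≤ Metric.infDist x S := Metric.infDist_nonneg
    have hsq : Metric.infDist x S ^ 2 ≤ ‖v‖ ^ 2 := pow_le_pow_left₀ hd0 hdist 2
    have h1 : (μ' / 2) * Metric.infDist x S ^ 2 ≤ (ν / 2) * Metric.infDist x S ^ 2 := by
      apply mul_le_mul_of_nonneg_right _ (by positivity)
      have : μ' ≤ ν := le_max_left _ _
      linarith
    have h2 : (ν / 2) * Metric.infDist x S ^ 2 ≤ (ν / 2) * ‖v‖ ^ 2 :=
      mul_le_mul_of_nonneg_left hsq (by positivity)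
    linarith
  -- combine eventualities
  have E1 : ∀ᶠ x in 𝓝 xb, φ (p x) = 0 ∧ P (p x - xb) = P (x - xb) := hqtend.eventually hev1
  have E2 : ∀ᶠ x in 𝓝 xb, p x ∈ U := hptend.eventually_mem (hUopen.mem_nhds hxU)
  have E3 : ∀ᶠ x in 𝓝 xb, p x ∈ ball xb δ := hptend.eventually_mem (ball_mem_nhds xb hδ0)
  have E4 : ∀ᶠ x in 𝓝 xb, x ∈ ball xb δ := eventually_mem_nhds_iff.mpr ((isOpen_ball).mem_nhds (mem_ball_self hδ0)) |>.mono (fun a ha => mem_of_mem_nhds ha)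
  filter_upwards [E1, E2, E3, E4] with x hx1 hxpU hxpb hxb
  exact main x (p x) hx1.1 hx1.2 hxpU hxpb hxb
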